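/- There exist η > 0 and C > 0 such that for every fluid model (y, x) and Lebesgue-almost every t ≥ 0 with ‖(y(t), x(t))‖_* ≥ C, the function s ↦ ‖(y(s), x(s))‖_* is differentiable at t and its derivative at t is at most -η. -/

import Mathlib

noncomputable def nu1 (β γ ε : ℝ) : ℝ := (γ * β - Real.sqrt (γ^2 * β^2 - 4 * ε * β)) / 2
noncomputable def nu2 (β γ ε : ℝ) : ℝ := (γ * β + Real.sqrt (γ^2 * β^2 - 4 * ε * β)) / 2

/-- The norm `‖u‖_*`: the Euclidean norm of the coordinates of `u` in the
eigenvector basis `v₁ = (β/ν₁, -1)`, `v₂ = (β/ν₂, -1)`. -/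
noncomputable def starNorm (β γ ε : ℝ) (u : ℝ × ℝ) : ℝ :=
  let a1 := β / nu1 β γ ε
  let a2 := β / nu2 β γ ε
  let α1 := (u.1 + a2 * u.2) / (a1 - a2)
  let α2 := -u.2 - α1
  Real.sqrt (α1 ^ 2 + α2 ^ 2)
open MeasureTheory Set Filter

/-- A fluid model: locally Lipschitz pair `(y, x)` on `[0,∞)` with `x ≥ -λ/β`,
satisfying the fluid ODE a.e. on `[0,∞)`. -/
def IsFluidModel (β γ ε lam : ℝ) (y x : ℝ → ℝ) : Prop :=
  (∀ T : ℝ, 0 < T → ∃ K : NNReal,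
      LipschitzOnWith K y (Set.Icc 0 T) ∧ LipschitzOnWith K x (Set.Icc 0 T)) ∧
  (∀ t : ℝ, 0 ≤ t → -lam / β ≤ x t) ∧
  (∀ᵐ t ∂(volume.restrict (Set.Ici (0 : ℝ))),
    ∃ y' x' : ℝ, HasDerivAt y y' t ∧ HasDerivAt x x' t ∧
      (-lam / β < x t → y' = β * x t ∧ x' = -(γ * β * x t) - ε * y t) ∧
      (x t = -lam / β → y' = -lam ∧ x' = max (γ * lam - ε * y t) 0))

/-- Lemma 4.2(iii): far from the origin, the `‖·‖_*`-norm of a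
fluid model decreases at least at a constant rate. -/
private lemma stmt4_aux1 (ν1 ν2 a b : ℝ) (h : ν1 ≤ ν2) :
    2*a*(-ν1*a) + 2*b*(-ν2*b) ≤ -(2*ν1)*(a^2+b^2) := by
  nlinarith [mul_nonneg (sub_nonneg.2 h) (sq_nonneg b)]

private lemma stmt4_aux2 (ν n : ℝ) (hν : 0 ≤ ν) (hn : 1 ≤ n) : ν*n ≤ ν*n^2 := by
  nlinarith [mul_nonneg hν (mul_nonneg (le_trans zero_le_one hn) (sub_nonneg.2 hn))]

private lemma stmt4_aux3 (n a b : ℝ) (hn : 0 ≤ n) (h : n^2 = a^2+b^2)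
    (ha : 0 ≤ a) (hb : b ≤ 0) : n ≤ a - b := by
  nlinarith [mul_nonneg ha (neg_nonneg.2 hb), sq_nonneg (a - b - n), sq_nonneg (a - b + n)]

private lemma stmt4_aux4 (ν1 ν2 lam Y : ℝ) (h1 : 0 < ν1) (h2 : 0 < ν2) (hl : 0 < lam)
    (h : (ν1+ν2)*lam ≤ (ν1*ν2)*Y) : lam ≤ ν2*Y ∧ lam ≤ ν1*Y := by
  constructor
  · nlinarith
  · nlinarith
theorem stmt_4 (β γ ε lam : ℝ) (hβ : 0 < β) (hγ : 0 < γ) (hε : 0 < ε)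
    (hεbound : ε < γ ^ 2 * β / 4) (hlam : 0 < lam) :
    ∃ η C : ℝ, 0 < η ∧ 0 < C ∧
      ∀ y x : ℝ → ℝ, IsFluidModel β γ ε lam y x →
        ∀ᵐ t ∂(volume.restrict (Set.Ici (0 : ℝ))),
          C ≤ starNorm β γ ε (y t, x t) →
            ∃ d : ℝ, HasDerivAt (fun s => starNorm β γ ε (y s, x s)) d t ∧
              d ≤ -η := by
  have hdisc : 0 < γ^2 * β^2 - 4*ε*β := by
    nlinarith [mul_pos (by linarith : (0:ℝ) < γ^2*β/4 - ε) hβ]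
  set s := Real.sqrt (γ^2*β^2 - 4*ε*β) with hs_def
  have hs0 : 0 < s := Real.sqrt_pos.mpr hdisc
  have hs2 : s^2 = γ^2*β^2 - 4*ε*β := Real.sq_sqrt hdisc.le
  have hslt : s < γ*β := by
    rw [hs_def, Real.sqrt_lt' (mul_pos hγ hβ)]
    nlinarith [mul_pos hε hβ]
  set ν1 := nu1 β γ ε with hν1_def
  set ν2 := nu2 β γ ε with hν2_def
  have hν1 : ν1 = (γ*β - s)/2 := rfl
  have hν2 : ν2 = (γ*β + s)/2 := rfl
  have hν1pos : 0 < ν1 := by rw [hν1]; linarith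
  have hν2pos : 0 < ν2 := by rw [hν2]; linarith
  have hltν : ν1 < ν2 := by rw [hν1, hν2]; linarith
  have hsum : ν1 + ν2 = γ*β := by rw [hν1, hν2]; ring
  have hprod : ν1*ν2 = ε*β := by
    rw [hν1, hν2]
    have h : (γ*β - s)/2 * ((γ*β + s)/2) = (γ^2*β^2 - s^2)/4 := by ring
    rw [h, hs2]; ring
  set a1 := β / ν1 with ha1_def
  set a2 := β / ν2 with ha2_def
  have ha1pos : 0 < a1 := div_pos hβ hν1pos
  have ha2pos : 0 < a2 := div_pos hβ hν2pos
  have ha2lt : a2 < a1 := div_lt_div_of_pos_left hβ hν1pos hltν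
  set D := a1 - a2 with hD_def
  have hDpos : 0 < D := sub_pos.mpr ha2lt
  have ha1ν : a1 * ν1 = β := by rw [ha1_def]; field_simp
  have ha2ν : a2 * ν2 = β := by rw [ha2_def]; field_simp
  have ha2ε : a2 * ε = ν1 := by
    rw [ha2_def, div_mul_eq_mul_div, div_eq_iff hν2pos.ne']
    linarith [hprod]
  have hDval : ν2 - ν1 = ε * D := by
    rw [hD_def, ha1_def, ha2_def]
    field_simp
    linear_combination (ν2 - ν1) * hprod
  set η := min ν1 (lam / D) with hη_def
  have hηpos : 0 < η := lt_min hν1pos (div_pos hlam hDpos)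
  have hην1 : η ≤ ν1 := min_le_left _ _
  have hηD : η ≤ lam / D := min_le_right _ _
  refine ⟨η, 1, hηpos, one_pos, ?_⟩
  intro y x hfm
  obtain ⟨-, hge, hae⟩ := hfm
  filter_upwards [hae, ae_restrict_mem measurableSet_Ici] with t ht htIci
  intro hC
  obtain ⟨y', x', hy', hx', hint, hbd⟩ := ht
  have hxge : -lam/β ≤ x t := hge t htIci
  set A1 : ℝ → ℝ := fun u => ((y u) + a2 * (x u)) / D with hA1_def
  set A2 : ℝ → ℝ := fun u => -(x u) - A1 u with hA2_def
  set g : ℝ → ℝ := fun u => A1 u ^ 2 + A2 u ^ 2 with hg_def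
  have hA1t : A1 t = ((y t) + a2 * (x t)) / D := rfl
  have hA2t : A2 t = -(x t) - A1 t := rfl
  have hgt : g t = A1 t ^ 2 + A2 t ^ 2 := rfl
  set B1 : ℝ := (y' + a2 * x') / D with hB1_def
  set B2 : ℝ := -x' - B1 with hB2_def
  have hdA1 : HasDerivAt A1 B1 t := ((hy'.add (hx'.const_mul a2)).div_const D)
  have hdA2 : HasDerivAt A2 B2 t := (hx'.neg).sub hdA1
  have hdg : HasDerivAt g (2 * A1 t * B1 + 2 * A2 t * B2) t := by
    have h : HasDerivAt g (((2:ℕ):ℝ) * A1 t ^ (2 - 1) * B1 + ((2:ℕ):ℝ) * A2 t ^ (2 - 1) * B2) t :=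
      ((hdA1.fun_pow 2).add (hdA2.fun_pow 2))
    convert h using 1
    norm_num
  have hstar : starNorm β γ ε (y t, x t) = Real.sqrt (g t) := rfl
  have hg0 : 0 ≤ g t := by rw [hgt]; positivity
  set Nt := Real.sqrt (g t) with hNt_def
  have hNt1 : 1 ≤ Nt := by rw [← hstar]; exact hC
  have hNtpos : 0 < Nt := by linarith
  have hNtsq : Nt^2 = g t := Real.sq_sqrt hg0
  have hgpos : 0 < g t := hNtsq ▸ pow_pos hNtpos 2
  have hdN : HasDerivAt (fun u => starNorm β γ ε (y u, x u))
      ((2 * A1 t * B1 + 2 * A2 t * B2) / (2 * Nt)) t := hdg.sqrt hgpos.ne'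
  refine ⟨_, hdN, ?_⟩
  -- It suffices to bound the derivative of g
  suffices hkey : 2 * A1 t * B1 + 2 * A2 t * B2 ≤ -(2 * η * Nt) by
    rw [div_le_iff₀ (by positivity)]
    linarith [hkey]
  -- The eigen-decay case
  have caseA : y' = β * x t → x' = -(γ*β*x t) - ε*y t →
      2 * A1 t * B1 + 2 * A2 t * B2 ≤ -(2 * η * Nt) := by
    intro hy'eq hx'eq
    have hnum : β * x t + a2 * (-(γ*β*x t) - ε*y t) = -ν1 * ((y t) + a2 * (x t)) := by
      linear_combination (-(x t)) * ha2ν + (a2 * (x t)) * hsum + (-(y t)) * ha2ε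
    have id1 : B1 = -ν1 * A1 t := by
      rw [hB1_def, hy'eq, hx'eq, hnum, mul_div_assoc, ← hA1t]
    have hA1e : (ν2 - ν1) * A1 t = ε * ((y t) + a2 * (x t)) := by
      rw [hA1t, hDval]
      field_simp
    have id2 : B2 = -ν2 * A2 t := by
      rw [hB2_def, id1, hA2t, hx'eq]
      linear_combination -hA1e - (x t) * hsum - (x t) * ha2ε
    rw [id1, id2]
    have h1 := stmt4_aux1 ν1 ν2 (A1 t) (A2 t) hltν.le
    have h2 : -(2*ν1) * (A1 t ^2 + A2 t ^2) = -(2*ν1) * Nt^2 := by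
      rw [hNtsq, hgt]
    have h3 : η * Nt ≤ ν1 * Nt := mul_le_mul_of_nonneg_right hην1 hNtpos.le
    have h4 : ν1 * Nt ≤ ν1 * Nt^2 := stmt4_aux2 ν1 Nt hν1pos.le hNt1
    linarith [h1, h2.le, h3, h4]
  rcases lt_or_eq_of_le hxge with hi | hb
  · obtain ⟨hy'eq, hx'eq⟩ := hint hi
    exact caseA hy'eq hx'eq
  · obtain ⟨hy'eq, hx'eq⟩ := hbd hb.symm
    rcases le_or_gt (γ*lam - ε*y t) 0 with hm | hm
    · -- boundary with x' = 0 : y t is large positive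
      have hx'0 : x' = 0 := by rw [hx'eq]; exact max_eq_right hm
      have hxt : x t = -lam/β := hb.symm
      have hm' : γ*lam ≤ ε*y t := by linarith
      have hmβ : (ν1+ν2)*lam ≤ (ν1*ν2)*(y t) := by
        rw [hsum, hprod]
        linarith [mul_le_mul_of_nonneg_left hm' hβ.le]
      obtain ⟨hyν2, hyν1⟩ := stmt4_aux4 ν1 ν2 lam (y t) hν1pos hν2pos hlam hmβ
      have hB1v : B1 = -(lam/D) := by rw [hB1_def, hy'eq, hx'0]; ring
      have hB2v : B2 = lam/D := by rw [hB2_def, hB1v, hx'0]; ring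
      have h5 : a2 * x t = -(lam/ν2) := by
        rw [hxt, ha2_def]
        field_simp
      have h6 : a1 * x t = -(lam/ν1) := by
        rw [hxt, ha1_def]
        field_simp
      have ha : 0 ≤ A1 t := by
        rw [hA1t]
        apply div_nonneg _ hDpos.le
        rw [h5]
        have : lam/ν2 ≤ y t := by
          rw [div_le_iff₀ hν2pos]; linarith [hyν2]
        linarith
      have hA2v : A2 t = -(((y t) + a1 * (x t))/D) := by
        rw [hA2t, hA1t, hD_def]
        field_simp [sub_ne_zero.mpr ha2lt.ne']
        ring
      have hb' : A2 t ≤ 0 := by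
        rw [hA2v, neg_nonpos]
        apply div_nonneg _ hDpos.le
        rw [h6]
        have : lam/ν1 ≤ y t := by
          rw [div_le_iff₀ hν1pos]; linarith [hyν1]
        linarith
      have hNab : Nt ≤ A1 t - A2 t := by
        refine stmt4_aux3 Nt (A1 t) (A2 t) hNtpos.le ?_ ha hb'
        rw [hNtsq, hgt]
      have h3 : η * Nt ≤ lam/D * Nt := mul_le_mul_of_nonneg_right hηD hNtpos.le
      have h4 : lam/D * Nt ≤ lam/D * (A1 t - A2 t) :=
        mul_le_mul_of_nonneg_left hNab (by positivity)
      rw [hB1v, hB2v]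
      have hexp : 2 * A1 t * (-(lam/D)) + 2 * A2 t * (lam/D)
          = -(2 * (lam/D * (A1 t - A2 t))) := by ring
      rw [hexp]
      linarith [h3, h4]
    · have hx'pos : x' = γ*lam - ε*y t := by rw [hx'eq]; exact max_eq_left hm.le
      have hy'eq' : y' = β * x t := by rw [hy'eq, ← hb]; field_simp
      have hx'eq' : x' = -(γ*β*x t) - ε*y t := by rw [hx'pos, ← hb]; field_simp
      exact caseA hy'eq' hx'eq'
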